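/- New generalized Sylvester identity, even case: for k even with 0 ≤ k ≤ q, det(M_k) / (det M_0)^{(s-1)^k} = [Π over odd i from 1 to k-1 of (det B_i)^{(s-1)^{k-1-i}}] / [Π over even j from 0 to k-2 of (det B_j)^{(s-1)^{k-1-j}}]. -/

import Mathlib

open Matrix Finset

lemma sylvester_block {K : Type*} [Field K] {p σ : Type*} [Fintype p] [DecidableEq p]
    [Fintype σ] [DecidableEq σ] [Nonempty σ]
    (A : Matrix p p K) (B : Matrix p σ K) (C : Matrix σ p K) (D : Matrix σ σ K)
    (hA : A.det ≠ 0) :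
    (Matrix.of (fun i j : σ =>
      (Matrix.fromBlocks A (Matrix.of fun r (_ : Fin 1) => B r j)
        (Matrix.of fun (_ : Fin 1) c => C i c) (Matrix.of fun _ _ => D i j)).det)).det
    = (Matrix.fromBlocks A B C D).det * A.det ^ (Fintype.card σ - 1) := by
  haveI : Invertible A := A.invertibleOfIsUnitDet (isUnit_iff_ne_zero.2 hA)
  have hentry : (Matrix.of (fun i j : σ =>
      (Matrix.fromBlocks A (Matrix.of fun r (_ : Fin 1) => B r j)
        (Matrix.of fun (_ : Fin 1) c => C i c) (Matrix.of fun _ _ => D i j)).det))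
      = A.det • (D - C * ⅟A * B) := by
    ext i j
    rw [Matrix.of_apply, Matrix.det_fromBlocks₁₁, Matrix.det_fin_one]
    simp [Matrix.mul_apply, Finset.mul_sum, Matrix.sub_apply, Matrix.smul_apply, smul_eq_mul]
  have hpow : A.det ^ Fintype.card σ = A.det * A.det ^ (Fintype.card σ - 1) := by
    rw [← pow_succ']
    congr 1
    have hc : 1 ≤ Fintype.card σ := Fintype.card_pos
    omega
  rw [hentry, Matrix.det_smul, Matrix.det_fromBlocks₁₁, hpow]
  ring

lemma sylvester_step {K : Type*} [Field K] {n m t s : ℕ} (M : Matrix (Fin n) (Fin m) K)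
    (hs1 : 1 ≤ s) (k : ℕ)
    (h1 : t + k * s + s ≤ n) (h2 : t + k * s + s ≤ m)
    (hne : (M.submatrix (Fin.castLE (by omega : t + k * s ≤ n))
        (Fin.castLE (by omega : t + k * s ≤ m))).det ≠ 0) :
    (Matrix.of (fun i j : Fin s =>
        (M.submatrix
          (Fin.snoc (Fin.castLE (by omega : t + k * s ≤ n))
            (⟨t + k * s + (i : ℕ), by have := i.isLt; omega⟩ : Fin n))
          (Fin.snoc (Fin.castLE (by omega : t + k * s ≤ m))
            (⟨t + k * s + (j : ℕ), by have := j.isLt; omega⟩ : Fin m))).det)).det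
    = (M.submatrix (Fin.castLE (by simp only [Nat.succ_mul]; omega : t + (k+1) * s ≤ n))
        (Fin.castLE (by simp only [Nat.succ_mul]; omega : t + (k+1) * s ≤ m))).det *
      (M.submatrix (Fin.castLE (by omega : t + k * s ≤ n))
        (Fin.castLE (by omega : t + k * s ≤ m))).det ^ (s - 1) := by
  haveI : Nonempty (Fin s) := ⟨⟨0, by omega⟩⟩
  set mk := t + k * s with hmk
  have hn : mk ≤ n := by omega
  have hm : mk ≤ m := by omega
  set A : Matrix (Fin mk) (Fin mk) K := M.submatrix (Fin.castLE hn) (Fin.castLE hm) with hA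
  set Bm : Matrix (Fin mk) (Fin s) K :=
    Matrix.of fun r j => M (Fin.castLE hn r) ⟨mk + (j:ℕ), by have := j.isLt; omega⟩ with hBm
  set Cm : Matrix (Fin s) (Fin mk) K :=
    Matrix.of fun i c => M ⟨mk + (i:ℕ), by have := i.isLt; omega⟩ (Fin.castLE hm c) with hCm
  set Dm : Matrix (Fin s) (Fin s) K :=
    Matrix.of fun i j => M ⟨mk + (i:ℕ), by have := i.isLt; omega⟩
      ⟨mk + (j:ℕ), by have := j.isLt; omega⟩ with hDm
  have key1 : ∀ i j : Fin s,
      (M.submatrix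
          (Fin.snoc (Fin.castLE (by omega : t + k * s ≤ n))
            (⟨t + k * s + (i : ℕ), by have := i.isLt; omega⟩ : Fin n))
          (Fin.snoc (Fin.castLE (by omega : t + k * s ≤ m))
            (⟨t + k * s + (j : ℕ), by have := j.isLt; omega⟩ : Fin m))).det
      = (Matrix.fromBlocks A (Matrix.of fun r (_ : Fin 1) => Bm r j)
        (Matrix.of fun (_ : Fin 1) c => Cm i c) (Matrix.of fun _ _ => Dm i j)).det := by
    intro i j
    rw [← Matrix.det_submatrix_equiv_self finSumFinEquiv]
    congr 1
    ext a b
    rcases a with a | a <;> rcases b with b | b <;>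
      simp [Matrix.fromBlocks, finSumFinEquiv_apply_left, finSumFinEquiv_apply_right,
        Fin.snoc, Fin.castLE, Fin.castAdd, Fin.natAdd, Fin.castLT] <;> rfl
  have key2 : (M.submatrix (Fin.castLE (by simp only [Nat.succ_mul]; omega : t + (k+1) * s ≤ n))
        (Fin.castLE (by simp only [Nat.succ_mul]; omega : t + (k+1) * s ≤ m))).det
      = (Matrix.fromBlocks A Bm Cm Dm).det := by
    rw [← Matrix.det_submatrix_equiv_self
      ((finSumFinEquiv : Fin mk ⊕ Fin s ≃ Fin (mk + s)).trans
        (finCongr (by simp only [Nat.succ_mul]; omega : mk + s = t + (k+1) * s)))]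
    congr 1
    ext a b
    rcases a with a | a <;> rcases b with b | b <;>
      simp [Matrix.fromBlocks, finSumFinEquiv_apply_left, finSumFinEquiv_apply_right,
        Fin.castLE, Fin.castAdd, Fin.natAdd, finCongr] <;> rfl
  calc (Matrix.of (fun i j : Fin s =>
        (M.submatrix
          (Fin.snoc (Fin.castLE (by omega : t + k * s ≤ n))
            (⟨t + k * s + (i : ℕ), by have := i.isLt; omega⟩ : Fin n))
          (Fin.snoc (Fin.castLE (by omega : t + k * s ≤ m))
            (⟨t + k * s + (j : ℕ), by have := j.isLt; omega⟩ : Fin m))).det)).det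
      = (Matrix.of (fun i j : Fin s =>
        (Matrix.fromBlocks A (Matrix.of fun r (_ : Fin 1) => Bm r j)
          (Matrix.of fun (_ : Fin 1) c => Cm i c) (Matrix.of fun _ _ => Dm i j)).det)).det := by
        congr 1; ext i j; exact key1 i j
    _ = (Matrix.fromBlocks A Bm Cm Dm).det * A.det ^ (Fintype.card (Fin s) - 1) :=
        sylvester_block A Bm Cm Dm hne
    _ = _ := by rw [key2, Fintype.card_fin]

theorem new_sylvester_even {K : Type*} [Field K] {n m t s q : ℕ}
    (M : Matrix (Fin n) (Fin m) K)
    (ht : 0 < t) (hs1 : 1 ≤ s) (hs : s ≤ min (n - t) (m - t))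
    (hr : min n m = t + q * s)
    (Mk B : ℕ → K)
    (hMk : ∀ k, k ≤ q → ∀ (h1 : t + k * s ≤ n) (h2 : t + k * s ≤ m),
      Mk k = (M.submatrix (Fin.castLE h1) (Fin.castLE h2)).det)
    (hB : ∀ k, k < q → ∀ (h1 : t + k * s + s ≤ n) (h2 : t + k * s + s ≤ m),
      B k = (Matrix.of (fun i j : Fin s =>
        (M.submatrix
          (Fin.snoc (Fin.castLE (by omega : t + k * s ≤ n))
            (⟨t + k * s + (i : ℕ), by have := i.isLt; omega⟩ : Fin n))
          (Fin.snoc (Fin.castLE (by omega : t + k * s ≤ m))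
            (⟨t + k * s + (j : ℕ), by have := j.isLt; omega⟩ : Fin m))).det)).det)
    (hM0 : Mk 0 ≠ 0) (hBne : ∀ k, k < q → B k ≠ 0)
    (k : ℕ) (hk : k ≤ q) (hke : Even k) :
    Mk k / (Mk 0) ^ ((s - 1) ^ k) =
      (∏ i ∈ (Finset.range k).filter (fun i => Odd i), (B i) ^ ((s - 1) ^ (k - 1 - i))) /
      (∏ j ∈ (Finset.range (k - 1)).filter (fun j => Even j), (B j) ^ ((s - 1) ^ (k - 1 - j))) := by
  -- bounds
  have hbound : ∀ j : ℕ, j ≤ q → t + j * s ≤ n ∧ t + j * s ≤ m := by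
    intro j hj
    have h1 : j * s ≤ q * s := Nat.mul_le_mul_right s hj
    have h2 : t + q * s ≤ n := by rw [← hr]; exact min_le_left n m
    have h3 : t + q * s ≤ m := by rw [← hr]; exact min_le_right n m
    omega
  set e : ℤ := ((s - 1 : ℕ) : ℤ) with he
  -- the recursion step
  have hstep : ∀ j, j < q → Mk j ≠ 0 → B j = Mk (j + 1) * Mk j ^ (s - 1) := by
    intro j hjq hne
    have hb1 := (hbound (j+1) hjq).1
    have hb2 := (hbound (j+1) hjq).2
    rw [Nat.succ_mul] at hb1 hb2
    have h1 : t + j * s + s ≤ n := by omega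
    have h2 : t + j * s + s ≤ m := by omega
    have hAne : (M.submatrix (Fin.castLE (by omega : t + j * s ≤ n))
        (Fin.castLE (by omega : t + j * s ≤ m))).det ≠ 0 := by
      rw [← hMk j (by omega) (by omega) (by omega)]; exact hne
    have := sylvester_step M hs1 j h1 h2 hAne
    rw [hB j hjq h1 h2, this, ← hMk (j+1) hjq (by simp only [Nat.succ_mul]; omega)
      (by simp only [Nat.succ_mul]; omega), ← hMk j (by omega) (by omega) (by omega)]
  -- main induction: closed formula with integer exponents
  have main : ∀ j, j ≤ q → Mk j ≠ 0 ∧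
      Mk j = Mk 0 ^ ((-e) ^ j) * ∏ i ∈ Finset.range j, B i ^ ((-e) ^ (j - 1 - i)) := by
    intro j
    induction j with
    | zero => intro _; exact ⟨hM0, by simp⟩
    | succ j ih =>
      intro hjq
      obtain ⟨hne, hform⟩ := ih (by omega)
      have hst := hstep j (by omega) hne
      have hBn := hBne j (by omega)
      have hpne : Mk j ^ (s - 1) ≠ 0 := pow_ne_zero _ hne
      have hne1 : Mk (j + 1) ≠ 0 := by
        intro h0; rw [hst, h0, zero_mul] at hBn; exact hBn rfl
      refine ⟨hne1, ?_⟩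
      have hrec : Mk (j + 1) = B j * Mk j ^ (-e) := by
        have : Mk j ^ (-e) = (Mk j ^ (s - 1))⁻¹ := by
          rw [_root_.zpow_neg, he, zpow_natCast]
        rw [this, hst]
        field_simp
      rw [hrec, hform, mul_zpow, ← _root_.zpow_mul, ← pow_succ]
      have hprod : (∏ i ∈ Finset.range j, B i ^ ((-e) ^ (j - 1 - i))) ^ (-e)
          = ∏ i ∈ Finset.range j, B i ^ ((-e) ^ (j - i)) := by
        rw [← Finset.prod_zpow]
        refine Finset.prod_congr rfl fun i hi => ?_
        rw [← _root_.zpow_mul, ← pow_succ]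
        congr 2
        rw [Finset.mem_range] at hi
        omega
      rw [hprod, Finset.prod_range_succ]
      have hlast : B j = B j ^ ((-e) ^ (j + 1 - 1 - j)) := by
        simp
      have hrw : ∀ i, i ∈ Finset.range j → B i ^ ((-e) ^ (j - i)) = B i ^ ((-e) ^ (j + 1 - 1 - i)) := by
        intro i hi
        rfl
      rw [Finset.prod_congr rfl hrw]
      rw [← hlast]
      ring
  obtain ⟨hne, hform⟩ := main k hk
  -- convert the closed formula to the even-case statement
  have hM0pow : Mk 0 ^ ((-e) ^ k) = Mk 0 ^ ((s - 1) ^ k) := by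
    rw [Even.neg_pow hke, he, ← Nat.cast_pow, zpow_natCast]
  have hsplit := Finset.prod_filter_mul_prod_filter_not (Finset.range k)
    (fun i => Odd i) (fun i => B i ^ ((-e) ^ (k - 1 - i)))
  -- odd part
  have hodd : ∏ i ∈ (Finset.range k).filter (fun i => Odd i), B i ^ ((-e) ^ (k - 1 - i))
      = ∏ i ∈ (Finset.range k).filter (fun i => Odd i), B i ^ ((s - 1) ^ (k - 1 - i)) := by
    refine Finset.prod_congr rfl fun i hi => ?_
    rw [Finset.mem_filter, Finset.mem_range] at hi
    have hpar : Even (k - 1 - i) := by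
      rw [Nat.even_iff] at hke ⊢
      rw [Nat.odd_iff] at hi
      omega
    rw [Even.neg_pow hpar, he, ← Nat.cast_pow, zpow_natCast]
  -- even part
  have hfeq : (Finset.range k).filter (fun i => ¬ Odd i)
      = (Finset.range (k - 1)).filter (fun j => Even j) := by
    ext i
    simp only [Finset.mem_filter, Finset.mem_range, Nat.not_odd_iff_even, Nat.even_iff]
    rw [Nat.even_iff] at hke
    omega
  have heven : ∏ i ∈ (Finset.range k).filter (fun i => ¬ Odd i), B i ^ ((-e) ^ (k - 1 - i))
      = (∏ j ∈ (Finset.range (k - 1)).filter (fun j => Even j), B j ^ ((s - 1) ^ (k - 1 - j)))⁻¹ := by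
    rw [hfeq, ← Finset.prod_inv_distrib]
    refine Finset.prod_congr rfl fun i hi => ?_
    rw [Finset.mem_filter, Finset.mem_range] at hi
    have hpar : Odd (k - 1 - i) := by
      rw [Nat.even_iff] at hke
      rw [Nat.even_iff] at hi
      rw [Nat.odd_iff]
      omega
    rw [Odd.neg_pow hpar, _root_.zpow_neg, he, ← Nat.cast_pow, zpow_natCast]
  rw [hform, hM0pow]
  rw [← hsplit, hodd, heven]
  have hP : Mk 0 ^ ((s - 1) ^ k) ≠ 0 := pow_ne_zero _ hM0
  rw [mul_comm, mul_div_assoc, div_self hP, mul_one, div_eq_mul_inv]
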